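/- (Determinant character formula for the symmetric traceless tensor T-functions of so(2r).) Let r ≥ 2 be an integer and x_1, …, x_r ∈ ℂ \ {0} with x_a ≠ x_b and x_a·x_b ≠ 1 for all a ≠ b, and set K_a := Π_{b ≠ a} x_b / ((x_b − x_a)(x_b − x_a^{−1})). Then the denominator determinant D := det_{1≤a,b≤r}( x_a^{r−b} + x_a^{−(r−b)} ) is nonzero, and for every integer s ≥ 0, (−1)^{r+1}·Σ_{a=1}^{r} K_a·( x_a^{s+r−1} + x_a^{−(s+r−1)} ) = N_s / D, where N_s := det_{1≤a,b≤r}( x_a^{c_b} + x_a^{−c_b} ) with exponents c_1 = r−1+s and c_b = r−b for 2 ≤ b ≤ r. -/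

import Mathlib

open Polynomial Matrix Finset
namespace Dr16
noncomputable def dd (n : ℕ) : Polynomial ℂ := Polynomial.dickson 1 1 n

lemma dd_zero : dd 0 = 2 := by
  rw [dd, Polynomial.dickson_zero]; norm_num

lemma dd_md : ∀ n : ℕ, (dd (n+1)).Monic ∧ (dd (n+1)).natDegree = n+1 := by
  have key : ∀ n : ℕ, ((dd (n+1)).Monic ∧ (dd (n+1)).natDegree = n+1) ∧
      ((dd (n+2)).Monic ∧ (dd (n+2)).natDegree = n+2) := by
    intro n
    induction n with
    | zero =>
      have h1 : dd 1 = X := by rw [dd, Polynomial.dickson_one]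
      have h2 : dd 2 = X ^ 2 - 2 := by
        rw [dd, Polynomial.dickson_two]; norm_num
      refine ⟨⟨by rw [h1]; exact monic_X, by rw [h1, natDegree_X]⟩, ?_, ?_⟩
      · rw [h2]
        apply (monic_X_pow 2).sub_of_left
        rw [degree_X_pow]
        calc degree (2 : ℂ[X]) ≤ 0 := by
              rw [show (2 : ℂ[X]) = C 2 by rw [map_ofNat]]; exact degree_C_le
        _ < 2 := by norm_num
      · rw [h2]
        rw [natDegree_sub_eq_left_of_natDegree_lt]
        · exact natDegree_X_pow 2
        · rw [natDegree_X_pow]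
          calc natDegree (2 : ℂ[X]) = 0 := natDegree_ofNat 2
          _ < 2 := by norm_num
    | succ k ih =>
      refine ⟨ih.2, ?_⟩
      have hrec : dd (k+3) = X * dd (k+2) - dd (k+1) := by
        have := Polynomial.dickson_add_two (R := ℂ) 1 1 (k+1)
        rw [dd, dd, dd]
        rw [show k+1+2 = k+3 from rfl, Polynomial.C_1, one_mul] at this; exact this
      have hdegle : (dd (k+1)).natDegree = k + 1 := ih.1.2
      have hm2 : (dd (k+2)).Monic := ih.2.1
      have hmul : (X * dd (k+2)).Monic := monic_X.mul hm2
      have hmuldeg : (X * dd (k+2)).natDegree = k + 3 := by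
        rw [natDegree_X_mul hm2.ne_zero, ih.2.2]
      constructor
      · rw [hrec]
        apply hmul.sub_of_left
        apply Polynomial.degree_lt_degree
        rw [hmuldeg, hdegle]; omega
      · rw [hrec, natDegree_sub_eq_left_of_natDegree_lt, hmuldeg]
        rw [hmuldeg, hdegle]; omega
  exact fun n => (key n).1

lemma dd_eval (x : ℂ) (hx : x ≠ 0) (n : ℕ) :
    (dd n).eval (x + x⁻¹) = x ^ n + x⁻¹ ^ n :=
  Polynomial.dickson_one_one_eval_add_inv x x⁻¹ (mul_inv_cancel₀ hx) n

noncomputable def Vp {N : ℕ} (z : Fin N → ℂ) : ℂ := ∏ i, ∏ j ∈ Finset.Ioi i, (z i - z j)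

lemma prod_pairs {N : ℕ} (g : Fin N → Fin N → ℂ) :
    ∏ i, ∏ j ∈ Finset.Ioi i, g i j
      = ∏ p ∈ Finset.univ.filter (fun p : Fin N × Fin N => p.1 < p.2), g p.1 p.2 := by
  rw [Finset.prod_filter, ← Finset.univ_product_univ, Finset.prod_product]
  refine Finset.prod_congr rfl fun i _ => ?_
  rw [show Finset.Ioi i = Finset.univ.filter (fun j => i < j) by ext j; simp,
    Finset.prod_filter]

lemma dicksonDet (n : ℕ) (z : Fin (n+1) → ℂ) :
    (Matrix.of fun a b : Fin (n+1) => (dd (n - (b:ℕ))).eval (z a)).det = 2 * Vp z := by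
  set w : Fin (n+1) → ℂ := fun a => z (Fin.rev a) with hw
  set p : Fin (n+1) → ℂ[X] := fun b => if (b:ℕ) = 0 then 1 else dd (b:ℕ) with hp
  set A : Matrix (Fin (n+1)) (Fin (n+1)) ℂ := Matrix.of fun a b => (p b).eval (w a) with hA
  have h1 : (Matrix.of fun a b : Fin (n+1) => (dd (n - (b:ℕ))).eval (z a))
      = (Matrix.of fun a b : Fin (n+1) => (dd (b:ℕ)).eval (w a)).submatrix
          (Fin.revPerm : Equiv.Perm (Fin (n+1))) (Fin.revPerm : Equiv.Perm (Fin (n+1))) := by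
    ext a b
    simp only [Matrix.submatrix_apply, Matrix.of_apply, Fin.revPerm_apply, hw, Fin.rev_rev]
    congr 2
    have hb := b.isLt
    rw [Fin.val_rev]
    omega
  rw [h1, Matrix.det_submatrix_equiv_self]
  have h2 : (Matrix.of fun a b : Fin (n+1) => (dd (b:ℕ)).eval (w a))
      = A.updateCol 0 ((2:ℂ) • fun a => A a 0) := by
    ext a b
    rw [Matrix.updateCol_apply]
    by_cases hb : b = 0
    · subst hb
      simp only [Matrix.of_apply, if_pos rfl, Pi.smul_apply, smul_eq_mul, hA, hp]
      norm_num [dd_zero]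
    · have hb' : (b:ℕ) ≠ 0 := fun h => hb (Fin.ext h)
      simp only [Matrix.of_apply, if_neg hb, hA, hp, if_neg hb']
  rw [h2, Matrix.det_updateCol_smul, Matrix.updateCol_eq_self]
  have hdeg : ∀ i : Fin (n+1), (p i).natDegree = (i:ℕ) := by
    intro i
    by_cases hi : (i:ℕ) = 0
    · simp [hp, hi, show i = 0 from Fin.ext hi]
    · obtain ⟨k, hk⟩ : ∃ k, (i:ℕ) = k + 1 := ⟨(i:ℕ) - 1, by omega⟩
      simp only [hp, if_neg hi, hk]
      exact (dd_md k).2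
  have hmon : ∀ i : Fin (n+1), (p i).Monic := by
    intro i
    by_cases hi : (i:ℕ) = 0
    · simp [hp, hi, monic_one, show i = 0 from Fin.ext hi]
    · obtain ⟨k, hk⟩ : ∃ k, (i:ℕ) = k + 1 := ⟨(i:ℕ) - 1, by omega⟩
      simp only [hp, if_neg hi, hk]
      exact (dd_md k).1
  have h3 : A.det = (Matrix.vandermonde w).det :=
    (Matrix.det_eval_matrixOfPolynomials_eq_det_vandermonde w p hdeg hmon).symm
  rw [h3, Matrix.det_vandermonde]
  congr 1
  rw [Vp, prod_pairs (fun i j => w j - w i), prod_pairs (fun i j => z i - z j)]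
  refine Finset.prod_nbij' (fun p => (p.2.rev, p.1.rev)) (fun p => (p.2.rev, p.1.rev))
    ?_ ?_ ?_ ?_ ?_
  · intro q hq
    simp only [Finset.mem_filter, Finset.mem_univ, true_and] at hq ⊢
    exact Fin.rev_lt_rev.mpr hq
  · intro q hq
    simp only [Finset.mem_filter, Finset.mem_univ, true_and] at hq ⊢
    exact Fin.rev_lt_rev.mpr hq
  · intro q _; simp [Fin.rev_rev]
  · intro q _; simp [Fin.rev_rev]
  · intro q _
    simp only [hw, Fin.rev_rev]

lemma prod_split (N : ℕ) (z : Fin (N+1) → ℂ) (a : Fin (N+1)) :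
    Vp z = ((-1)^(a:ℕ) * ∏ b ∈ Finset.univ.erase a, (z a - z b)) * Vp (z ∘ a.succAbove) := by
  rw [Vp, Vp, prod_pairs (fun i j => z i - z j),
    prod_pairs (fun i j => (z ∘ a.succAbove) i - (z ∘ a.succAbove) j)]
  set S := Finset.univ.filter (fun p : Fin (N+1) × Fin (N+1) => p.1 < p.2) with hS
  rw [← Finset.prod_filter_mul_prod_filter_not S (fun p => p.1 = a ∨ p.2 = a)]
  congr 1
  · -- pairs containing a
    have hbij : ∏ p ∈ S.filter (fun p => p.1 = a ∨ p.2 = a), (z p.1 - z p.2)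
        = ∏ b ∈ Finset.univ.erase a, (if b < a then z b - z a else z a - z b) := by
      refine (Finset.prod_bij (fun b _ => if b < a then ((b, a) : Fin (N+1) × Fin (N+1)) else (a, b)) ?_ ?_ ?_ ?_).symm
      · intro b hb
        rcases lt_or_gt_of_ne (Finset.ne_of_mem_erase hb) with h | h
        · simp [hS, if_pos h, h]
        · simp [hS, if_neg (not_lt.mpr h.le), h]
      · intro b hb c hc hbc
        split_ifs at hbc with h1 h2 h2 <;> simp only [Prod.mk.injEq] at hbc
        · exact hbc.1
        · exact absurd hbc.1 (ne_of_lt h1)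
        · exact absurd hbc.1.symm (ne_of_lt h2)
        · exact hbc.2
      · intro p hp
        simp only [hS, Finset.mem_filter, Finset.mem_univ, true_and] at hp
        obtain ⟨hlt, hq⟩ := hp
        rcases hq with h | h
        · refine ⟨p.2, Finset.mem_erase.mpr ⟨?_, Finset.mem_univ _⟩, ?_⟩
          · subst h; exact (ne_of_gt hlt)
          · subst h
            show (if p.2 < p.1 then (p.2, p.1) else (p.1, p.2)) = p
            rw [if_neg (not_lt.mpr hlt.le)]
        · refine ⟨p.1, Finset.mem_erase.mpr ⟨?_, Finset.mem_univ _⟩, ?_⟩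
          · subst h; exact (ne_of_lt hlt)
          · subst h
            show (if p.1 < p.2 then (p.1, p.2) else (p.2, p.1)) = p
            rw [if_pos hlt]
      · intro b hb
        by_cases h : b < a <;> simp [h]
    rw [hbij]
    have : ∀ b ∈ Finset.univ.erase a, (if b < a then z b - z a else z a - z b)
        = (if b < a then (-1:ℂ) else 1) * (z a - z b) := by
      intro b _; split_ifs <;> ring
    rw [Finset.prod_congr rfl this, Finset.prod_mul_distrib]
    congr 1
    rw [Finset.prod_ite, Finset.prod_const, Finset.prod_const, one_pow, mul_one]
    congr 1
    have : (Finset.univ.erase a).filter (fun b => b < a) = Finset.Iio a := by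
      ext b
      simp only [Finset.mem_filter, Finset.mem_erase, Finset.mem_univ, Finset.mem_Iio, true_and]
      exact ⟨fun h => h.2, fun h => ⟨⟨ne_of_lt h, trivial⟩, h⟩⟩
    rw [this, Fin.card_Iio]
  · -- pairs avoiding a
    refine (Finset.prod_bij
      (fun (q : Fin N × Fin N) _ => ((a.succAbove q.1, a.succAbove q.2) : Fin (N+1) × Fin (N+1)))
      ?_ ?_ ?_ ?_).symm
    · intro q hq
      simp only [Finset.mem_filter, Finset.mem_univ, true_and, hS] at hq ⊢
      refine ⟨(Fin.strictMono_succAbove a) hq, ?_⟩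
      push_neg
      exact ⟨a.succAbove_ne q.1, a.succAbove_ne q.2⟩
    · intro q _ q' _ h
      simp only [Prod.mk.injEq] at h
      have hi := (Fin.succAbove_right_injective (p := a))
      exact Prod.ext (hi h.1) (hi h.2)
    · intro p hp
      simp only [Finset.mem_filter, Finset.mem_univ, true_and, hS] at hp
      obtain ⟨hlt, hne⟩ := hp
      push_neg at hne
      obtain ⟨i, hi⟩ := Fin.exists_succAbove_eq hne.1
      obtain ⟨j, hj⟩ := Fin.exists_succAbove_eq hne.2
      refine ⟨(i, j), Finset.mem_filter.mpr ⟨Finset.mem_univ _, ?_⟩, by simp [hi, hj]⟩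
      have := hlt; rw [← hi, ← hj] at this
      exact (Fin.succAbove_lt_succAbove_iff).mp this
    · intro q _; simp

end Dr16

open Dr16 in
/-- **Determinant character formula for the symmetric traceless tensor
T-functions of `so(2r)`.**  Let `r ≥ 2` and let `x_1, …, x_r` be nonzero complex numbers
with `x_a ≠ x_b` and `x_a·x_b ≠ 1` for all `a ≠ b`, and set
`K_a := ∏_{b ≠ a} x_b / ((x_b − x_a)(x_b − x_a⁻¹))`.  Then the denominator determinant
`D := det_{1≤a,b≤r}( x_a^{r−b} + x_a^{−(r−b)} )` is nonzero, and for every integer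
`s ≥ 0`,
`(−1)^{r+1}·∑_{a=1}^r K_a·( x_a^{s+r−1} + x_a^{−(s+r−1)} ) = N_s / D`, where
`N_s := det_{1≤a,b≤r}( x_a^{c_b} + x_a^{−c_b} )` with exponents `c_1 = r−1+s` and
`c_b = r−b` for `2 ≤ b ≤ r`.  (Here rows and columns are indexed by `Fin r`, with the
column index shifted by one, so `c` is `r−1+s` at the first column and `r−1−b` at the
zero-based column `b ≥ 1`.) -/
theorem Dr_symmetric_traceless_character (r : ℕ) (hr : 2 ≤ r)
    (x : Fin r → ℂ) (hx0 : ∀ a, x a ≠ 0)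
    (hx1 : ∀ a b : Fin r, a ≠ b → x a ≠ x b)
    (hx2 : ∀ a b : Fin r, a ≠ b → x a * x b ≠ 1)
    (K : Fin r → ℂ)
    (hK : ∀ a, K a = ∏ b ∈ Finset.univ.erase a,
      x b / ((x b - x a) * (x b - (x a)⁻¹)))
    (D : ℂ)
    (hD : D = Matrix.det (Matrix.of fun a b : Fin r =>
      x a ^ ((r : ℤ) - 1 - (b : ℕ)) + x a ^ (-((r : ℤ) - 1 - (b : ℕ))))) :
    D ≠ 0 ∧
    ∀ s : ℤ, 0 ≤ s →
      (-1) ^ (r + 1) *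
        (∑ a, K a * (x a ^ (s + (r : ℤ) - 1) + x a ^ (-(s + (r : ℤ) - 1))))
      = Matrix.det (Matrix.of fun a b : Fin r =>
          x a ^ (if (b : ℕ) = 0 then (r : ℤ) - 1 + s else (r : ℤ) - 1 - (b : ℕ)) +
          x a ^ (-(if (b : ℕ) = 0 then (r : ℤ) - 1 + s else (r : ℤ) - 1 - (b : ℕ)))) / D := by
  obtain ⟨m, rfl⟩ : ∃ m, r = m + 2 := ⟨r - 2, by omega⟩
  clear hr
  set y : Fin (m+2) → ℂ := fun a => x a + (x a)⁻¹ with hy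
  have hyv : ∀ a, y a = x a + (x a)⁻¹ := fun a => rfl
  have hyd : ∀ a b : Fin (m+2), a ≠ b → y a - y b ≠ 0 := by
    intro a b hab h
    have e : (x a - x b) * (x a * x b - 1) = (y a - y b) * (x a * x b) := by
      rw [hyv, hyv]
      field_simp [hx0 a, hx0 b]
      ring
    rw [h, zero_mul] at e
    rcases mul_eq_zero.mp e with h2 | h2
    · exact hx1 a b hab (sub_eq_zero.mp h2)
    · exact hx2 a b hab (by rwa [sub_eq_zero] at h2)
  have hentry : ∀ (a : Fin (m+2)) (c : ℕ),
      x a ^ ((c : ℤ)) + x a ^ (-(c : ℤ)) = (dd c).eval (y a) := by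
    intro a c
    rw [hyv, dd_eval (x a) (hx0 a), zpow_natCast, _root_.zpow_neg, zpow_natCast, ← inv_pow]
  have hDmat : (Matrix.of fun a b : Fin (m+2) =>
      x a ^ ((↑(m+2):ℤ) - 1 - (b:ℕ)) + x a ^ (-((↑(m+2):ℤ) - 1 - (b:ℕ))))
      = Matrix.of fun a b : Fin (m+2) => (dd ((m+1) - (b:ℕ))).eval (y a) := by
    ext a b
    have e1 : ((m+2:ℕ):ℤ) - 1 - (b:ℕ) = (((m+1) - (b:ℕ) : ℕ) : ℤ) := by
      have := b.isLt; push_cast; omega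
    rw [Matrix.of_apply, Matrix.of_apply, e1, hentry]
  have hDval : D = 2 * Vp y := by rw [hD, hDmat]; exact dicksonDet (m+1) y
  have hVne : Vp y ≠ 0 := by
    rw [Vp]
    apply Finset.prod_ne_zero_iff.mpr
    intro i _
    apply Finset.prod_ne_zero_iff.mpr
    intro j hj
    exact hyd i j (ne_of_lt (Finset.mem_Ioi.mp hj))
  have hDne : D ≠ 0 := by rw [hDval]; exact mul_ne_zero two_ne_zero hVne
  refine ⟨hDne, ?_⟩
  intro s hs
  obtain ⟨t, rfl⟩ := Int.eq_ofNat_of_zero_le hs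
  set P : Fin (m+2) → ℂ := fun a => ∏ b ∈ Finset.univ.erase a, (y a - y b) with hP
  have hPne : ∀ a, P a ≠ 0 := fun a => Finset.prod_ne_zero_iff.mpr
    fun b hb => hyd a b (Finset.ne_of_mem_erase hb).symm
  have hK' : ∀ a, K a = (-1:ℂ)^(m+1) * (P a)⁻¹ := by
    intro a
    rw [hK]
    have step : ∀ b ∈ Finset.univ.erase a,
        x b / ((x b - x a) * (x b - (x a)⁻¹)) = ((-1:ℂ) * (y a - y b))⁻¹ := by
      intro b hb
      have hba : y b - y a ≠ 0 := hyd b a (Finset.ne_of_mem_erase hb)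
      have e : (x b - x a) * (x b - (x a)⁻¹) = x b * (y b - y a) := by
        rw [hyv, hyv]
        field_simp [hx0 a, hx0 b]
        ring
      rw [e, show ((-1:ℂ) * (y a - y b)) = y b - y a by ring,
        div_mul_cancel_left₀ (hx0 b)]
    rw [Finset.prod_congr rfl step]
    have h2 : ∀ b ∈ Finset.univ.erase a, ((-1:ℂ) * (y a - y b))⁻¹ = (-1) * (y a - y b)⁻¹ := by
      intro b hb; rw [mul_inv]; norm_num
    rw [Finset.prod_congr rfl h2, Finset.prod_mul_distrib, Finset.prod_const,
      Finset.card_erase_of_mem (Finset.mem_univ a), Finset.card_univ, Fintype.card_fin,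
      ← Finset.prod_inv_distrib]
    norm_num
  -- N matrix
  have hNmat : (Matrix.of fun a b : Fin (m+2) =>
        x a ^ (if (b : ℕ) = 0 then (↑(m+2):ℤ) - 1 + (t:ℤ) else (↑(m+2):ℤ) - 1 - (b : ℕ)) +
        x a ^ (-(if (b : ℕ) = 0 then (↑(m+2):ℤ) - 1 + (t:ℤ) else (↑(m+2):ℤ) - 1 - (b : ℕ))))
      = Matrix.of fun a b : Fin (m+2) =>
          (dd (if (b:ℕ) = 0 then m+1+t else (m+1) - (b:ℕ))).eval (y a) := by
    ext a b
    by_cases hb : (b:ℕ) = 0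
    · rw [Matrix.of_apply, Matrix.of_apply, if_pos hb,
        show ((m+2:ℕ):ℤ) - 1 + (t:ℤ) = ((m+1+t : ℕ) : ℤ) by push_cast; omega, hentry,
        if_pos hb]
    · rw [Matrix.of_apply, Matrix.of_apply, if_neg hb,
        show ((m+2:ℕ):ℤ) - 1 - (b:ℕ) = (((m+1) - (b:ℕ) : ℕ) : ℤ) by
          have := b.isLt; push_cast; omega, hentry, if_neg hb]
  rw [hNmat]
  have hdet : (Matrix.of fun a b : Fin (m+2) =>
        (dd (if (b:ℕ) = 0 then m+1+t else (m+1) - (b:ℕ))).eval (y a)).det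
      = ∑ i : Fin (m+2), (-1:ℂ)^(i:ℕ) * ((dd (m+1+t)).eval (y i))
          * (2 * Vp (y ∘ i.succAbove)) := by
    rw [Matrix.det_succ_column_zero]
    refine Finset.sum_congr rfl fun i _ => ?_
    congr 1
    have hsub : ((Matrix.of fun a b : Fin (m+2) =>
        (dd (if (b:ℕ) = 0 then m+1+t else (m+1) - (b:ℕ))).eval (y a)).submatrix
          i.succAbove Fin.succ)
        = Matrix.of fun a b : Fin (m+1) => (dd (m - (b:ℕ))).eval ((y ∘ i.succAbove) a) := by
      ext a b
      simp only [Matrix.submatrix_apply, Matrix.of_apply, Function.comp_apply]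
      congr 2
      have hv : ((Fin.succ b : Fin (m+2)) : ℕ) = (b:ℕ) + 1 := rfl
      rw [hv, if_neg (Nat.succ_ne_zero _)]
      omega
    rw [hsub, dicksonDet m (y ∘ i.succAbove)]
  rw [hdet]
  have key : ∀ i : Fin (m+2), (-1:ℂ)^(i:ℕ) * (2 * Vp (y ∘ i.succAbove)) = D * (P i)⁻¹ := by
    intro i
    have h1 := prod_split (m+1) y i
    have hPi : (∏ b ∈ Finset.univ.erase i, (y i - y b)) = P i := rfl
    rw [hDval, h1, hPi]
    field_simp [hPne i]
  have hf : ∀ a : Fin (m+2),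
      x a ^ ((t:ℤ) + (↑(m+2):ℤ) - 1) + x a ^ (-((t:ℤ) + (↑(m+2):ℤ) - 1))
        = (dd (m+1+t)).eval (y a) := by
    intro a
    rw [show (t:ℤ) + ((m+2:ℕ):ℤ) - 1 = ((m+1+t : ℕ) : ℤ) by push_cast; omega, hentry]
  calc (-1:ℂ) ^ (m+2+1) * ∑ a, K a * (x a ^ ((t:ℤ) + (↑(m+2):ℤ) - 1)
        + x a ^ (-((t:ℤ) + (↑(m+2):ℤ) - 1)))
      = ∑ a, (dd (m+1+t)).eval (y a) * (P a)⁻¹ := by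
        rw [Finset.mul_sum]
        refine Finset.sum_congr rfl fun a _ => ?_
        have hsign : (-1:ℂ)^(m+2+1) * (-1:ℂ)^(m+1) = 1 := by
          rw [← pow_add, show m+2+1+(m+1) = 2*(m+2) by omega, pow_mul]
          norm_num
        rw [hK' a, hf a]
        linear_combination ((P a)⁻¹ * (dd (m+1+t)).eval (y a)) * hsign
    _ = (∑ i : Fin (m+2), (-1:ℂ)^(i:ℕ) * ((dd (m+1+t)).eval (y i))
          * (2 * Vp (y ∘ i.succAbove))) / D := by
        rw [Finset.sum_div]
        refine Finset.sum_congr rfl fun i _ => ?_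
        rw [eq_div_iff hDne]
        linear_combination (-((dd (m+1+t)).eval (y i))) * key i
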